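/- Let H be a cocommutative Hopf algebra over a field k and q : H → H an idempotent bialgebra endomorphism (q∘q = q). Then (H, ·, ∘, q) is a Hopf truss, where a ∘ b := q(a)·b; in particular a ∘ (b·c) = (a₁ ∘ b) · λ(q(a₂)) · (a₃ ∘ c) for all a,b,c ∈ H, and ∘ is associative and a coalgebra morphism. -/

import Mathlib

open TensorProduct Coalgebra

theorem aux1 (k H : Type*) [Field k] [Ring H] [HopfAlgebra k H]
    (q : H →ₗ[k] H)
    (hq_comul : Coalgebra.comul ∘ₗ q = TensorProduct.map q q ∘ₗ Coalgebra.comul)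
    (hq_counit : Coalgebra.counit ∘ₗ q = Coalgebra.counit)
    (x : H) (rx : Coalgebra.Repr k x (H × H)) :
    ∑ j ∈ rx.index, HopfAlgebra.antipode (R := k) (q (rx.left j)) * q (rx.right j)
      = algebraMap k H (Coalgebra.counit x) := by
  have hqc := LinearMap.congr_fun hq_comul x
  simp only [LinearMap.comp_apply] at hqc
  have this := HopfAlgebra.sum_antipode_mul_eq_algebraMap_counit (R := k)
    (⟨rx.index, fun i => q (rx.left i), fun i => q (rx.right i), by
      rw [hqc, ← rx.eq, map_sum]
      simp only [TensorProduct.map_tmul]⟩ : Coalgebra.Repr k (q x) (H × H))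
  have hc := LinearMap.congr_fun hq_counit x
  simp only [LinearMap.comp_apply] at hc
  simpa [hc] using this

theorem aux2 (k H : Type*) [Field k] [Ring H] [HopfAlgebra k H]
    (q : H →ₗ[k] H)
    (hq_comul : Coalgebra.comul ∘ₗ q = TensorProduct.map q q ∘ₗ Coalgebra.comul)
    (hq_counit : Coalgebra.counit ∘ₗ q = Coalgebra.counit)
    (c x : H) :
    (LinearMap.mul' k H)
      ((TensorProduct.map ((HopfAlgebra.antipode (R := k)) ∘ₗ q)
          ((LinearMap.mul' k H) ∘ₗ TensorProduct.map q LinearMap.id))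
        ((TensorProduct.assoc k H H H).toLinearMap ((Coalgebra.comul (R := k) x) ⊗ₜ c)))
      = Coalgebra.counit (R := k) x • c := by
  have rx := ℛ k x
  rw [← rx.eq]
  rw [TensorProduct.sum_tmul]
  simp only [map_sum, TensorProduct.assoc_tmul, TensorProduct.map_tmul,
    LinearMap.comp_apply, LinearMap.id_apply, LinearMap.mul'_apply]
  simp only [LinearEquiv.coe_coe, TensorProduct.assoc_tmul, TensorProduct.map_tmul,
    LinearMap.comp_apply, LinearMap.id_apply, LinearMap.mul'_apply]
  rw [show ∀ s : Finset (H × H), ∑ j ∈ s, HopfAlgebra.antipode (R := k) (q (rx.left j)) * (q (rx.right j) * c)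
      = (∑ j ∈ s, HopfAlgebra.antipode (R := k) (q (rx.left j)) * q (rx.right j)) * c from
    fun s => by rw [Finset.sum_mul]; simp [mul_assoc]]
  rw [aux1 k H q hq_comul hq_counit x rx, Algebra.smul_def]

noncomputable def mbar (k : Type*) {H : Type*} [Field k] [Ring H] [HopfAlgebra k H]
    (Φ : H →ₗ[k] H) (m : H ⊗[k] H →ₗ[k] H) : H ⊗[k] H →ₗ[k] H :=
  (LinearMap.mul' k H) ∘ₗ (TensorProduct.map Φ m) ∘ₗ
    (TensorProduct.assoc k H H H).toLinearMap ∘ₗ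
    (TensorProduct.map Coalgebra.comul LinearMap.id)

/-- The map `a ⊗ b ⊗ c ↦ ρ(a₁ ⊗ b) · λ(σ(a₂)) · ρ(a₃ ⊗ c)`. -/
noncomputable def trussRHS (k : Type*) {H : Type*} [Field k] [Ring H] [HopfAlgebra k H]
    (σ : H →ₗ[k] H) (ρ : H ⊗[k] H →ₗ[k] H) : H ⊗[k] (H ⊗[k] H) →ₗ[k] H :=
  (LinearMap.mul' k H) ∘ₗ
    TensorProduct.map ρ
      ((LinearMap.mul' k H) ∘ₗ
        TensorProduct.map ((HopfAlgebra.antipode (R := k)) ∘ₗ σ) ρ ∘ₗ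
        (TensorProduct.assoc k H H H).toLinearMap) ∘ₗ
    (TensorProduct.tensorTensorTensorComm k H (H ⊗[k] H) H H).toLinearMap ∘ₗ
    TensorProduct.map ((TensorProduct.map LinearMap.id Coalgebra.comul) ∘ₗ Coalgebra.comul)
      LinearMap.id

theorem stmt18 (k H : Type*) [Field k] [Ring H] [HopfAlgebra k H]
    (hcoc : ∀ a : H, (TensorProduct.comm k H H) (Coalgebra.comul (R := k) a)
      = Coalgebra.comul a)
    (q : H →ₗ[k] H)
    (hq_mul : ∀ a b : H, q (a * b) = q a * q b)
    (hq_one : q 1 = 1)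
    (hq_comul : Coalgebra.comul ∘ₗ q = TensorProduct.map q q ∘ₗ Coalgebra.comul)
    (hq_counit : Coalgebra.counit ∘ₗ q = Coalgebra.counit)
    (hqq : q ∘ₗ q = q) :
    let ρ : H ⊗[k] H →ₗ[k] H := (LinearMap.mul' k H) ∘ₗ TensorProduct.map q LinearMap.id
    (ρ ∘ₗ TensorProduct.map LinearMap.id (LinearMap.mul' k H) = trussRHS k q ρ) ∧
    (ρ ∘ₗ TensorProduct.map LinearMap.id ρ
      = ρ ∘ₗ TensorProduct.map ρ LinearMap.id ∘ₗ
          (TensorProduct.assoc k H H H).symm.toLinearMap) ∧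
    (Coalgebra.comul ∘ₗ ρ
      = (TensorProduct.map ρ ρ) ∘ₗ
          (TensorProduct.tensorTensorTensorComm k H H H H).toLinearMap ∘ₗ
          (TensorProduct.map Coalgebra.comul Coalgebra.comul)) ∧
    (Coalgebra.counit ∘ₗ ρ
      = (TensorProduct.lid k k).toLinearMap ∘ₗ
          TensorProduct.map Coalgebra.counit Coalgebra.counit) := by
  intro ρ
  refine ⟨?_, ?_, ?_, ?_⟩
  · -- truss compatibility
    ext a b c
    have r := ℛ k a
    have ha : ∑ i ∈ r.index, Coalgebra.counit (R := k) (r.right i) • r.left i = a := by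
      have h2 := Coalgebra.sum_tmul_counit_eq r
      apply_fun (TensorProduct.rid k H) at h2
      simp only [map_sum, TensorProduct.rid_tmul, one_smul] at h2
      exact h2
    rw [trussRHS]
    simp only [AlgebraTensorModule.curry_apply, TensorProduct.curry_apply,
      LinearMap.coe_restrictScalars, LinearMap.comp_apply, TensorProduct.map_tmul,
      LinearMap.id_apply]
    rw [← r.eq, map_sum]
    simp only [TensorProduct.map_tmul, LinearMap.id_apply]
    rw [TensorProduct.sum_tmul, map_sum, map_sum]
    simp only [LinearEquiv.coe_coe, tensorTensorTensorComm_tmul, TensorProduct.map_tmul]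
    rw [map_sum]
    simp only [LinearMap.mul'_apply, LinearMap.comp_apply, LinearEquiv.coe_coe]
    have haux2 : ∀ x : H, (LinearMap.mul' k H)
        ((TensorProduct.map ((HopfAlgebra.antipode (R := k)) ∘ₗ q)
            ((LinearMap.mul' k H) ∘ₗ TensorProduct.map q LinearMap.id))
          ((TensorProduct.assoc k H H H) ((Coalgebra.comul (R := k) x) ⊗ₜ c)))
        = Coalgebra.counit (R := k) x • c := fun x => aux2 k H q hq_comul hq_counit c x
    simp only [ρ, haux2]
    simp only [ρ, LinearMap.comp_apply, TensorProduct.map_tmul, LinearMap.id_apply,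
      LinearMap.mul'_apply, mul_smul_comm, ← mul_assoc]
    have : ∑ i ∈ r.index, Coalgebra.counit (R := k) (r.right i) • (q (r.left i) * b * c)
        = q (∑ i ∈ r.index, Coalgebra.counit (R := k) (r.right i) • r.left i) * b * c := by
      rw [map_sum, Finset.sum_mul, Finset.sum_mul]
      simp [smul_mul_assoc]
    rw [this, ha]
  · -- associativity
    ext a b c
    have h := LinearMap.congr_fun hqq a
    simp only [LinearMap.comp_apply, LinearMap.id_apply] at h
    simp [ρ, hq_mul, h, mul_assoc]
  · -- comul morphism
    ext a b
    have hq := LinearMap.congr_fun hq_comul a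
    simp only [LinearMap.comp_apply] at hq
    simp only [AlgebraTensorModule.curry_apply, TensorProduct.curry_apply,
      LinearMap.coe_restrictScalars, LinearMap.comp_apply, TensorProduct.map_tmul, ρ,
      LinearMap.id_apply, LinearMap.mul'_apply, Bialgebra.comul_mul, hq]
    have ea := (ℛ k a).eq
    have eb := (ℛ k b).eq
    rw [← ea, ← eb]
    simp only [map_sum, TensorProduct.map_tmul, TensorProduct.sum_tmul,
      TensorProduct.tmul_sum, Finset.sum_mul, Finset.mul_sum, map_sum,
      tensorTensorTensorComm_tmul, Algebra.TensorProduct.tmul_mul_tmul,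
      LinearMap.mul'_apply, LinearMap.id_apply, LinearMap.coe_comp,
      Function.comp_apply, LinearEquiv.coe_coe, TensorProduct.map_tmul]
  · -- counit morphism
    ext a b
    have hc := LinearMap.congr_fun hq_counit a
    simp only [LinearMap.comp_apply] at hc
    simp [ρ, hc]
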